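/- Let η be convex and differentiable and f convex and differentiable with q(u) = ∫₀ᵘ η'f' dξ. For any u < v and any s with (v-u)·s = f(v) - f(u), one has ∫ᵤᵛ η'(ξ)(f'(ξ) - s) dξ ≥ 0, i.e., s(η(u) - η(v)) - (q(u) - q(v)) ≥ 0. -/
import Mathlib

open MeasureTheory intervalIntegral Set

lemma mono_abs_bound (F : ℝ → ℝ) (hF : Monotone F) {a b x : ℝ} (hx : x ∈ Set.uIcc a b) :
    |F x| ≤ max |F a| |F b| := by
  obtain ⟨h1, h2⟩ := hx
  have l1 : F (a ⊓ b) ≤ F x := hF h1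
  have l2 : F x ≤ F (a ⊔ b) := hF h2
  rw [abs_le]
  have m1 := le_max_left |F a| |F b|
  have m2 := le_max_right |F a| |F b|
  have n1 := neg_abs_le (F a); have n2 := neg_abs_le (F b)
  have p1 := le_abs_self (F a); have p2 := le_abs_self (F b)
  rcases le_total a b with hab | hab
  · rw [inf_eq_left.mpr hab] at l1; rw [sup_eq_right.mpr hab] at l2
    constructor <;> linarith
  · rw [inf_eq_right.mpr hab] at l1; rw [sup_eq_left.mpr hab] at l2
    constructor <;> linarith

/-- Product of two monotone functions is interval integrable. -/
lemma mono_mul_intervalIntegrable {g h : ℝ → ℝ} (hg : Monotone g) (hh : Monotone h)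
    (a b : ℝ) : IntervalIntegrable (fun ξ => h ξ * g ξ) volume a b := by
  rw [intervalIntegrable_iff]
  apply Measure.integrableOn_of_bounded
    (M := (max |h a| |h b|) * (max |g a| |g b|)) measure_Ioc_lt_top.ne
    ((hh.measurable.mul hg.measurable).aestronglyMeasurable)
  filter_upwards [ae_restrict_mem measurableSet_Ioc] with x hx
  have hx' : x ∈ Set.uIcc a b := ⟨hx.1.le, hx.2⟩
  calc ‖h x * g x‖ = |h x| * |g x| := abs_mul _ _
    _ ≤ (max |h a| |h b|) * (max |g a| |g b|) :=
        mul_le_mul (mono_abs_bound h hh hx') (mono_abs_bound g hg hx') (abs_nonneg _)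
          (le_trans (abs_nonneg _) (mono_abs_bound h hh hx'))

/-- Shock admissibility for convex fluxes: for `u < v` and the
Rankine–Hugoniot slope `s`, one has `∫ᵤᵛ η'(ξ)(f'(ξ) - s) dξ ≥ 0`, i.e.
`s(η(u) - η(v)) - (q(u) - q(v)) ≥ 0`. -/
theorem shock_admissibility_convex
    (f η : ℝ → ℝ)
    (hf : ConvexOn ℝ Set.univ f) (hη : ConvexOn ℝ Set.univ η)
    (hfd : Differentiable ℝ f) (hηd : Differentiable ℝ η)
    (q : ℝ → ℝ) (hq : ∀ u : ℝ, q u = ∫ ξ in (0:ℝ)..u, deriv η ξ * deriv f ξ)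
    (u v s : ℝ) (huv : u < v) (hs : (v - u) * s = f v - f u) :
    (0 ≤ ∫ ξ in u..v, deriv η ξ * (deriv f ξ - s)) ∧
    0 ≤ s * (η u - η v) - (q u - q v) := by
  have hgm : Monotone (deriv f) := by
    have := hf.monotoneOn_deriv (fun x _ => hfd x)
    intro x y hxy; exact this (Set.mem_univ x) (Set.mem_univ y) hxy
  have hhm : Monotone (deriv η) := by
    have := hη.monotoneOn_deriv (fun x _ => hηd x)
    intro x y hxy; exact this (Set.mem_univ x) (Set.mem_univ y) hxy
  -- the crossing point
  set S : Set ℝ := {x | x ∈ Set.Icc u v ∧ deriv f x ≤ s} with hSdef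
  classical
  set c : ℝ := if S.Nonempty then sSup S else u with hcdef
  have hbdd : BddAbove S := ⟨v, fun x hx => hx.1.2⟩
  have hcmem : c ∈ Set.Icc u v := by
    rw [hcdef]
    split_ifs with hne
    · obtain ⟨x0, hx0⟩ := hne
      exact ⟨le_trans hx0.1.1 (le_csSup hbdd hx0), csSup_le ⟨x0, hx0⟩ (fun x hx => hx.1.2)⟩
    · exact ⟨le_refl u, huv.le⟩
  -- pointwise inequality
  have key : ∀ ξ ∈ Set.Icc u v,
      deriv η c * (deriv f ξ - s) ≤ deriv η ξ * (deriv f ξ - s) := by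
    intro ξ hξ
    rcases le_or_gt (deriv f ξ) s with hle | hlt
    · have hξS : ξ ∈ S := ⟨hξ, hle⟩
      have hξc : ξ ≤ c := by
        rw [hcdef]; split_ifs with hne
        · exact le_csSup hbdd hξS
        · exact absurd ⟨ξ, hξS⟩ hne
      exact mul_le_mul_of_nonpos_right (hhm hξc) (by linarith)
    · have hcξ : c ≤ ξ := by
        rw [hcdef]; split_ifs with hne
        · refine csSup_le hne (fun x hx => ?_)
          by_contra hxi
          push_neg at hxi
          exact absurd (le_trans (hgm hxi.le) hx.2) (not_le.mpr hlt)
        · exact hξ.1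
      exact mul_le_mul_of_nonneg_right (hhm hcξ) (by linarith)
  -- integrability facts
  have hgint : ∀ a b : ℝ, IntervalIntegrable (deriv f) volume a b := fun a b =>
    (hgm.monotoneOn _).intervalIntegrable
  have hhint : ∀ a b : ℝ, IntervalIntegrable (deriv η) volume a b := fun a b =>
    (hhm.monotoneOn _).intervalIntegrable
  have hprod : ∀ a b : ℝ, IntervalIntegrable (fun ξ => deriv η ξ * deriv f ξ) volume a b :=
    fun a b => mono_mul_intervalIntegrable hgm hhm a b
  have hmain : IntervalIntegrable (fun ξ => deriv η ξ * (deriv f ξ - s)) volume u v := by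
    have : (fun ξ => deriv η ξ * (deriv f ξ - s))
        = fun ξ => deriv η ξ * deriv f ξ - s * deriv η ξ := by
      funext ξ; ring
    rw [this]
    exact (hprod u v).sub ((hhint u v).const_mul s)
  have hlower : IntervalIntegrable (fun ξ => deriv η c * (deriv f ξ - s)) volume u v :=
    ((hgint u v).sub (intervalIntegrable_const)).const_mul _
  -- FTC computations
  have hftcf : (∫ ξ in u..v, deriv f ξ) = f v - f u :=
    integral_deriv_eq_sub (fun x _ => hfd x) (hgint u v)
  have hftcη : (∫ ξ in u..v, deriv η ξ) = η v - η u :=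
    integral_deriv_eq_sub (fun x _ => hηd x) (hhint u v)
  have hlowval : (∫ ξ in u..v, deriv η c * (deriv f ξ - s)) = 0 := by
    rw [intervalIntegral.integral_const_mul, intervalIntegral.integral_sub (hgint u v)
      intervalIntegrable_const, hftcf, intervalIntegral.integral_const]
    rw [smul_eq_mul]
    rw [← hs]; ring
  have hmono := intervalIntegral.integral_mono_on huv.le hlower hmain
    (fun ξ hξ => key ξ hξ)
  have first : 0 ≤ ∫ ξ in u..v, deriv η ξ * (deriv f ξ - s) := by
    rw [hlowval] at hmono; exact hmono
  refine ⟨first, ?_⟩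
  -- rewrite the integral
  have hq' : q v - q u = ∫ ξ in u..v, deriv η ξ * deriv f ξ := by
    rw [hq u, hq v]
    rw [← intervalIntegral.integral_interval_sub_left (hprod 0 v) (hprod 0 u)]
  have expand : (∫ ξ in u..v, deriv η ξ * (deriv f ξ - s))
      = (q v - q u) - s * (η v - η u) := by
    have : (fun ξ => deriv η ξ * (deriv f ξ - s))
        = fun ξ => deriv η ξ * deriv f ξ - s * deriv η ξ := by
      funext ξ; ring
    rw [this, intervalIntegral.integral_sub (hprod u v) ((hhint u v).const_mul s),
      intervalIntegral.integral_const_mul, hftcη, hq']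
  rw [expand] at first
  linarith
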